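/- (a) For every odd n ≥ 3 one has ∫ x S_{n−2}(x) dμ(x) ≠ 0, and for every even n ≥ 4 one has ∫ x² S_{n−2}(x) dμ(x) ≠ 0; hence ρ_n is well defined. (b) For every n ≥ 1 the monic polynomial 𝒫_n(x) := S_n(x) + ρ_n S_{n−2}(x) satisfies ∫ 𝒫_n(x) dμ(x) = 0; for n ≥ 2 also ∫ x 𝒫_n(x) dμ(x) = 0; for n ≥ 3 also ∫ x² 𝒫_n(x) dμ(x) = 0; and ∫ 𝒫_n(x) R_k(x) dμ(x) = 0 for every k with 1 ≤ k ≤ n − 3. -/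

import Mathlib

open MeasureTheory Polynomial

/-- Evaluation of a real polynomial at a complex point. -/
noncomputable def evC (p : Polynomial ℝ) (z : ℂ) : ℂ :=
  (p.map (algebraMap ℝ ℂ)).eval z

/-- Evaluation of the derivative of a real polynomial at a complex point. -/
noncomputable def devC (p : Polynomial ℝ) (z : ℂ) : ℂ :=
  (Polynomial.derivative (p.map (algebraMap ℝ ℂ))).eval z

/-- The (topological) support of a measure on ℝ: points all of whose
neighborhoods have nonzero measure. -/
def measSupport (μ : Measure ℝ) : Set ℝ := {x | ∀ U ∈ nhds x, μ U ≠ 0}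

/-- c_n = R_n(i) R_{n+1}(-i) - R_{n+1}(i) R_n(-i). -/
noncomputable def cconst (R : ℕ → Polynomial ℝ) (n : ℕ) : ℂ :=
  evC (R n) Complex.I * evC (R (n+1)) (-Complex.I)
    - evC (R (n+1)) Complex.I * evC (R n) (-Complex.I)

/-- The 3×3 determinant polynomial D_n(x) ∈ ℂ[x], whose first two rows are the
values of R_n, R_{n+1}, R_{n+2} at i and -i and whose last row consists of the
polynomials themselves. -/
noncomputable def Dpoly (R : ℕ → Polynomial ℝ) (n : ℕ) : Polynomial ℂ :=
  Matrix.det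
    !![Polynomial.C (evC (R n) Complex.I), Polynomial.C (evC (R (n+1)) Complex.I),
         Polynomial.C (evC (R (n+2)) Complex.I);
       Polynomial.C (evC (R n) (-Complex.I)), Polynomial.C (evC (R (n+1)) (-Complex.I)),
         Polynomial.C (evC (R (n+2)) (-Complex.I));
       (R n).map (algebraMap ℝ ℂ), (R (n+1)).map (algebraMap ℝ ℂ),
         (R (n+2)).map (algebraMap ℝ ℂ)]

/-- The coefficients ρ_n: ρ_n = 0 for n ≤ 2, and for n ≥ 3,
ρ_n = -(∫ x S_n dμ)/(∫ x S_{n-2} dμ) for odd n and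
ρ_n = -(∫ x² S_n dμ)/(∫ x² S_{n-2} dμ) for even n. -/
noncomputable def rho (μ : Measure ℝ) (S : ℕ → Polynomial ℝ) (n : ℕ) : ℝ :=
  if n ≤ 2 then 0
  else if Odd n then
    -(∫ x, x * (S n).eval x ∂μ) / (∫ x, x * (S (n-2)).eval x ∂μ)
  else
    -(∫ x, x^2 * (S n).eval x ∂μ) / (∫ x, x^2 * (S (n-2)).eval x ∂μ)


set_option maxRecDepth 20000

lemma coeff_comp_neg_X (p : Polynomial ℝ) (j : ℕ) :
    (p.comp (-X)).coeff j = (-1)^j * p.coeff j := by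
  induction p using Polynomial.induction_on' with
  | add p q hp hq => simp [add_comp, coeff_add, hp, hq, mul_add]
  | monomial n a =>
      rw [monomial_comp]
      have hneg : ((-X : Polynomial ℝ))^n = Polynomial.C ((-1:ℝ)^n) * X^n := by
        rw [neg_pow, C_pow, C_neg, C_1]
      rw [hneg, coeff_C_mul, coeff_C_mul, coeff_X_pow, coeff_monomial]
      rcases eq_or_ne n j with rfl | hne
      · simp [mul_comm]
      · simp [hne, Ne.symm hne]

lemma comp_neg_of_eval (p : Polynomial ℝ) (c : ℝ) (h : ∀ x, p.eval (-x) = c * p.eval x) :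
    p.comp (-X) = Polynomial.C c * p :=
  Polynomial.funext fun r => by simp [eval_comp, h]

lemma evC_neg_I (p : Polynomial ℝ) (c : ℝ) (h : p.comp (-X) = Polynomial.C c * p) :
    evC p (-Complex.I) = (c : ℂ) * evC p Complex.I := by
  have : (p.map (algebraMap ℝ ℂ)).eval (-Complex.I)
      = ((p.comp (-X)).map (algebraMap ℝ ℂ)).eval Complex.I := by
    rw [map_comp]
    simp [eval_comp]
  rw [evC, this, h]
  simp [evC]

lemma evC_conj (p : Polynomial ℝ) (z : ℂ) :
    (starRingEnd ℂ) (evC p z) = evC p ((starRingEnd ℂ) z) := by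
  rw [evC, evC, eval_map, eval_map, hom_eval₂]
  congr 1
  ext r
  simp [Complex.conj_ofReal]

lemma integrable_div (μ : Measure ℝ) (hint : ∀ p : Polynomial ℝ, Integrable (fun x => p.eval x) μ)
    (p : Polynomial ℝ) : Integrable (fun x => p.eval x / (1+x^2)^2) μ := by
  have hc : Continuous (fun x : ℝ => p.eval x / (1+x^2)^2) := by
    apply (p.continuous_aeval).div (by continuity)
    intro x; positivity
  refine (hint p).mono hc.aestronglyMeasurable ?_
  refine Filter.Eventually.of_forall (fun x => ?_)
  have h1 : (1:ℝ) ≤ (1+x^2)^2 := by nlinarith [sq_nonneg x]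
  rw [Real.norm_eq_abs, Real.norm_eq_abs, abs_div, abs_of_nonneg (by positivity : (0:ℝ) ≤ (1+x^2)^2)]
  exact div_le_self (abs_nonneg _) h1

lemma integral_odd (μ : Measure ℝ) (hsymm : μ.map (fun x => -x) = μ)
    (f : ℝ → ℝ) (hcont : Continuous f) (hodd : ∀ x, f (-x) = - f x) :
    ∫ x, f x ∂μ = 0 := by
  have h1 : ∫ x, f x ∂μ = ∫ x, f (-x) ∂μ := by
    conv_lhs => rw [← hsymm]
    exact integral_map (by fun_prop) hcont.aestronglyMeasurable
  have h2 : ∫ x, f (-x) ∂μ = - ∫ x, f x ∂μ := by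
    simp only [hodd]
    exact integral_neg f
  linarith [h1, h2]

lemma orth_span (μ : Measure ℝ) (hint : ∀ p : Polynomial ℝ, Integrable (fun x => p.eval x) μ)
    (E : ℕ → Polynomial ℝ) (hE : ∀ k, (E k).Monic) (hEd : ∀ k, (E k).natDegree = k)
    (t : Polynomial ℝ) (d : ℕ) (horth : ∀ k, k ≤ d → ∫ x, t.eval x * (E k).eval x ∂μ = 0) :
    ∀ q : Polynomial ℝ, q.natDegree ≤ d → ∫ x, t.eval x * q.eval x ∂μ = 0 := by
  suffices H : ∀ N, N ≤ d → ∀ q : Polynomial ℝ, q.natDegree ≤ N →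
      ∫ x, t.eval x * q.eval x ∂μ = 0 by
    exact fun q hq => H d le_rfl q hq
  intro N
  induction N with
  | zero =>
      intro _ q hq
      have hE0 : E 0 = 1 := (hE 0).natDegree_eq_zero.mp (hEd 0)
      have h0 := horth 0 (Nat.zero_le d)
      rw [hE0] at h0
      simp only [eval_one, mul_one] at h0
      rw [Polynomial.eq_C_of_natDegree_le_zero hq]
      simp only [eval_C]
      rw [MeasureTheory.integral_mul_const, h0, zero_mul]
  | succ N ih =>
      intro hNd q hq
      set c := q.coeff (N+1) with hc
      set q2 := q - Polynomial.C c * E (N+1) with hq2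
      have h2 : q2.natDegree ≤ N := by
        apply natDegree_le_iff_coeff_eq_zero.mpr
        intro m hm
        rw [hq2, coeff_sub, coeff_C_mul]
        rcases eq_or_lt_of_le (Nat.succ_le_of_lt hm) with he | hlt
        · rw [← he]
          have : (E (N+1)).coeff (N+1) = 1 := by
            have := (hE (N+1)).coeff_natDegree
            rwa [hEd (N+1)] at this
          rw [this, mul_one, sub_self]
        · have hqm : q.coeff m = 0 := coeff_eq_zero_of_natDegree_lt (lt_of_le_of_lt hq hlt)
          have hEm : (E (N+1)).coeff m = 0 := by
            apply coeff_eq_zero_of_natDegree_lt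
            rw [hEd (N+1)]; exact hlt
          rw [hqm, hEm, mul_zero, sub_zero]
      have hdecomp : q = q2 + Polynomial.C c * E (N+1) := by rw [hq2]; ring
      rw [hdecomp]
      have key : (fun x => t.eval x * (q2 + Polynomial.C c * E (N+1)).eval x)
          = fun x => (t * q2).eval x + c * (t.eval x * (E (N+1)).eval x) := by
        funext x; simp [eval_add, eval_mul, eval_C]; ring
      rw [key]
      have i1 : Integrable (fun x => (t * q2).eval x) μ := hint _
      have i2 : Integrable (fun x => c * (t.eval x * (E (N+1)).eval x)) μ := by
        have := hint (t * E (N+1))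
        simp only [eval_mul] at this
        exact this.const_mul c
      rw [integral_add i1 i2, MeasureTheory.integral_const_mul]
      have e1 : ∫ x, (t * q2).eval x ∂μ = 0 := by
        simp only [eval_mul]
        exact ih (le_of_lt hNd) q2 h2
      rw [e1, horth (N+1) hNd, mul_zero, add_zero]

lemma Dpoly_expand (R : ℕ → Polynomial ℝ) (n : ℕ) :
    Dpoly R n =
      Polynomial.C (evC (R (n+1)) Complex.I * evC (R (n+2)) (-Complex.I)
          - evC (R (n+2)) Complex.I * evC (R (n+1)) (-Complex.I)) * (R n).map (algebraMap ℝ ℂ)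
      + Polynomial.C (evC (R (n+2)) Complex.I * evC (R n) (-Complex.I)
          - evC (R n) Complex.I * evC (R (n+2)) (-Complex.I)) * (R (n+1)).map (algebraMap ℝ ℂ)
      + Polynomial.C (cconst R n) * (R (n+2)).map (algebraMap ℝ ℂ) := by
  rw [Dpoly, Matrix.det_fin_three, cconst]
  simp only [Matrix.cons_val_zero, Matrix.cons_val_one, Matrix.head_cons, Matrix.cons_val_two,
    Matrix.tail_cons, Matrix.head_fin_const, map_sub, map_mul, Matrix.of_apply, Matrix.cons_val',
    Matrix.empty_val', Matrix.cons_val_fin_one]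
  ring

lemma Srec
    (R : ℕ → Polynomial ℝ) (S : ℕ → Polynomial ℝ)
    (hc : ∀ n, cconst R n ≠ 0)
    (hS : ∀ n, Polynomial.C (cconst R n) * ((1 + Polynomial.X^2)^2)
            * ((S n).map (algebraMap ℝ ℂ)) = Dpoly R n)
    (hpar : ∀ n, (R n).comp (-X) = Polynomial.C ((-1:ℝ)^n) * R n)
    (n : ℕ) :
    ∃ g : ℝ, (1 + Polynomial.X^2)^2 * S n
        = Polynomial.C g * R n + R (n+2) := by
  set a0 := evC (R n) Complex.I with ha0
  set a1 := evC (R (n+1)) Complex.I with ha1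
  set a2 := evC (R (n+2)) Complex.I with ha2
  set b0 := evC (R n) (-Complex.I) with hb0
  set b1 := evC (R (n+1)) (-Complex.I) with hb1
  set b2 := evC (R (n+2)) (-Complex.I) with hb2
  have hb0e := evC_neg_I _ _ (hpar n)
  have hb1e := evC_neg_I _ _ (hpar (n+1))
  have hb2e := evC_neg_I _ _ (hpar (n+2))
  rw [← ha0, ← hb0] at hb0e
  rw [← ha1, ← hb1] at hb1e
  rw [← ha2, ← hb2] at hb2e
  -- middle coefficient vanishes
  have hmid : a2 * b0 - a0 * b2 = 0 := by
    rw [hb0e, hb2e]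
    push_cast [pow_succ]
    ring
  have hcc : cconst R n = a0 * b1 - a1 * b0 := rfl
  set c := cconst R n with hcdef
  set lam := a1 * b2 - a2 * b1 with hlam
  -- key identity over ℂ
  have hkey : Polynomial.C c * ((1 + Polynomial.X^2)^2 * (S n).map (algebraMap ℝ ℂ))
      = Polynomial.C lam * (R n).map (algebraMap ℝ ℂ)
        + Polynomial.C c * (R (n+2)).map (algebraMap ℝ ℂ) := by
    rw [← mul_assoc, hS n, Dpoly_expand]
    rw [show evC (R (n+2)) Complex.I * evC (R n) (-Complex.I)
        - evC (R n) Complex.I * evC (R (n+2)) (-Complex.I) = a2 * b0 - a0 * b2 from rfl, hmid]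
    rw [show evC (R (n+1)) Complex.I * evC (R (n+2)) (-Complex.I)
        - evC (R (n+2)) Complex.I * evC (R (n+1)) (-Complex.I) = lam from rfl]
    simp [hcdef]
  -- gamma is real
  set γ := lam / c with hγdef
  have hconjlam : (starRingEnd ℂ) lam = -lam := by
    have e1 : (starRingEnd ℂ) a1 = b1 := by
      rw [ha1, evC_conj]; simp [Complex.conj_I, hb1]
    have e2 : (starRingEnd ℂ) a2 = b2 := by
      rw [ha2, evC_conj]; simp [Complex.conj_I, hb2]
    have f1 : (starRingEnd ℂ) b1 = a1 := by
      rw [hb1, evC_conj]; simp [Complex.conj_I, ha1]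
    have f2 : (starRingEnd ℂ) b2 = a2 := by
      rw [hb2, evC_conj]; simp [Complex.conj_I, ha2]
    rw [hlam, map_sub, map_mul, map_mul, e1, e2, f1, f2]
    ring
  have hconjc : (starRingEnd ℂ) c = -c := by
    have e0 : (starRingEnd ℂ) a0 = b0 := by
      rw [ha0, evC_conj]; simp [Complex.conj_I, hb0]
    have e1 : (starRingEnd ℂ) a1 = b1 := by
      rw [ha1, evC_conj]; simp [Complex.conj_I, hb1]
    have f0 : (starRingEnd ℂ) b0 = a0 := by
      rw [hb0, evC_conj]; simp [Complex.conj_I, ha0]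
    have f1 : (starRingEnd ℂ) b1 = a1 := by
      rw [hb1, evC_conj]; simp [Complex.conj_I, ha1]
    rw [hcc, map_sub, map_mul, map_mul, e0, e1, f0, f1]
    ring
  have hγreal : (starRingEnd ℂ) γ = γ := by
    rw [hγdef, map_div₀, hconjlam, hconjc, neg_div_neg_eq]
  obtain ⟨g, hg⟩ : ∃ g : ℝ, (g : ℂ) = γ := ⟨γ.re, Complex.conj_eq_iff_re.mp hγreal⟩
  refine ⟨g, ?_⟩
  -- cancel C c over ℂ
  have hCc : (Polynomial.C c : Polynomial ℂ) ≠ 0 := by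
    simpa using hc n
  have hC : ((1 + Polynomial.X^2)^2 * (S n).map (algebraMap ℝ ℂ))
      = Polynomial.C (γ) * (R n).map (algebraMap ℝ ℂ)
        + (R (n+2)).map (algebraMap ℝ ℂ) := by
    apply mul_left_cancel₀ hCc
    have hcγ : c * γ = lam := by
      rw [hγdef, mul_div_assoc'] 
      exact mul_div_cancel_left₀ lam (hc n)
    rw [hkey, mul_add, ← mul_assoc, ← Polynomial.C_mul, hcγ]
  -- descend to ℝ
  apply Polynomial.map_injective (algebraMap ℝ ℂ) (algebraMap ℝ ℂ).injective
  rw [Polynomial.map_mul, Polynomial.map_add, Polynomial.map_mul, Polynomial.map_C]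
  rw [show ((algebraMap ℝ ℂ) g) = γ from hg, ← hC]
  congr 1
  simp

section S4
open MeasureTheory Polynomial

lemma monic_og : ((1 + Polynomial.X^2 : Polynomial ℝ)^2).Monic := by
  have h2 : (1 + Polynomial.X^2 : Polynomial ℝ).Monic := by
    have := Polynomial.monic_X_pow_add_C (R := ℝ) (1:ℝ) (n := 2) (by norm_num)
    have e : (Polynomial.X^2 + Polynomial.C (1:ℝ)) = 1 + Polynomial.X^2 := by
      rw [Polynomial.C_1]; ring
    rwa [e] at this
  exact h2.pow 2

lemma natDegree_og : ((1 + Polynomial.X^2 : Polynomial ℝ)^2).natDegree = 4 := by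
  have e : ((1 + Polynomial.X^2 : Polynomial ℝ)) = Polynomial.X^2 + Polynomial.C 1 := by
    rw [Polynomial.C_1]; ring
  rw [Polynomial.natDegree_pow, e, Polynomial.natDegree_X_pow_add_C]

lemma devC_og_mul (q : Polynomial ℝ) :
    devC ((1 + Polynomial.X^2)^2 * q) Complex.I = 0 := by
  rw [devC, Polynomial.map_mul, Polynomial.derivative_mul, Polynomial.eval_add,
    Polynomial.eval_mul, Polynomial.eval_mul]
  have h0 : Polynomial.eval Complex.I
      (Polynomial.map (algebraMap ℝ ℂ) ((1 + Polynomial.X^2)^2)) = 0 := by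
    simp [Complex.I_sq]
  have h1 : Polynomial.eval Complex.I
      (Polynomial.derivative (Polynomial.map (algebraMap ℝ ℂ) ((1 + Polynomial.X^2)^2))) = 0 := by
    simp only [Polynomial.map_pow, Polynomial.map_add, Polynomial.map_one, Polynomial.map_pow,
      Polynomial.map_X, Polynomial.derivative_pow, Polynomial.eval_mul]
    simp [Complex.I_sq]
  rw [h0, h1]
  ring


lemma small_decomp (r : Polynomial ℝ) (hdeg : r.natDegree ≤ 3)
    (hd : Polynomial.eval Complex.I (Polynomial.derivative (r.map (algebraMap ℝ ℂ))) = 0) :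
    r = Polynomial.C (r.coeff 3) * (Polynomial.X^3 + Polynomial.C 3 * Polynomial.X)
        + Polynomial.C (r.coeff 0) := by
  have h3 : (Polynomial.map (algebraMap ℝ ℂ) (Polynomial.derivative r)).natDegree < 3 := by
    have h1 : (Polynomial.map (algebraMap ℝ ℂ) (Polynomial.derivative r)).natDegree
        ≤ (Polynomial.derivative r).natDegree := Polynomial.natDegree_map_le
    have h2 := Polynomial.natDegree_derivative_le r
    omega
  rw [Polynomial.derivative_map, Polynomial.eval_eq_sum_range' h3] at hd
  simp only [Finset.sum_range_succ, Finset.sum_range_zero, zero_add, pow_zero, pow_one,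
    Polynomial.coeff_map, Polynomial.coeff_derivative] at hd
  rw [Complex.I_sq] at hd
  push_cast at hd
  have hre := congrArg Complex.re hd
  have him := congrArg Complex.im hd
  simp [Complex.add_re, Complex.add_im, Complex.mul_re, Complex.mul_im, Complex.I_re,
    Complex.I_im] at hre him
  have hc2 : r.coeff 2 = 0 := by linarith
  have hc13 : r.coeff 1 = 3 * r.coeff 3 := by linarith
  ext j
  rw [Polynomial.coeff_add, Polynomial.coeff_C_mul, Polynomial.coeff_add, Polynomial.coeff_C_mul,
    Polynomial.coeff_X_pow, Polynomial.coeff_X, Polynomial.coeff_C]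
  match j with
  | 0 => norm_num
  | 1 => norm_num [hc13]; ring
  | 2 => norm_num [hc2]
  | 3 => norm_num
  | (j+4) =>
      have h1 : r.coeff (j+4) = 0 :=
        Polynomial.coeff_eq_zero_of_natDegree_lt (by omega)
      rw [if_neg (by omega : ¬ (j+4 = 3)), if_neg (by omega : ¬ (j+4 = 0)), if_neg (by omega : ¬ (1 = j+4))]
      simp [h1]

lemma decomp (p : Polynomial ℝ) (hd : devC p Complex.I = 0) :
    ∃ (q : Polynomial ℝ) (a b : ℝ),
      p = (1 + Polynomial.X^2)^2 * q
          + Polynomial.C a * (Polynomial.X^3 + Polynomial.C 3 * Polynomial.X) + Polynomial.C b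
      ∧ q.natDegree = p.natDegree - 4 := by
  obtain ⟨q, hq, hdiv⟩ : ∃ q, q = p /ₘ ((1 + Polynomial.X^2)^2)
      ∧ p %ₘ ((1 + Polynomial.X^2)^2) + (1 + Polynomial.X^2)^2 * q = p :=
    ⟨_, rfl, Polynomial.modByMonic_add_div p _⟩
  set r := p %ₘ ((1 + Polynomial.X^2)^2) with hr
  have hrdeg : r.natDegree ≤ 3 := by
    rcases eq_or_ne r 0 with h | h
    · simp [h]
    · have hlt := Polynomial.degree_modByMonic_lt p monic_og
      rw [← hr] at hlt
      have h4 : ((1 + Polynomial.X^2 : Polynomial ℝ)^2).degree = (4:ℕ) := by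
        rw [Polynomial.degree_eq_natDegree monic_og.ne_zero, natDegree_og]
      rw [h4] at hlt
      have := (Polynomial.natDegree_lt_iff_degree_lt h).mpr hlt
      omega
  have hsub : r = p - (1 + Polynomial.X^2)^2 * q := by rw [← hdiv]; ring
  have hrd : Polynomial.eval Complex.I
      (Polynomial.derivative (r.map (algebraMap ℝ ℂ))) = 0 := by
    have h1 := devC_og_mul q
    rw [devC] at h1 hd
    rw [hsub, Polynomial.map_sub, Polynomial.derivative_sub, Polynomial.eval_sub, hd, h1, sub_zero]
  refine ⟨q, r.coeff 3, r.coeff 0, ?_, ?_⟩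
  · conv_lhs => rw [← hdiv]
    nth_rewrite 1 [small_decomp r hrdeg hrd]
    ring
  · rw [hq, Polynomial.natDegree_divByMonic p monic_og, natDegree_og]

end S4
section S5
open MeasureTheory Polynomial

lemma monic_add_aux (p q : Polynomial ℝ) (k : ℕ) (hp : p.Monic) (hpk : p.natDegree = k)
    (hq : q.natDegree < k) : (p + q).Monic ∧ (p + q).natDegree = k := by
  constructor
  · apply hp.add_of_left
    apply Polynomial.degree_lt_degree
    omega
  · rw [Polynomial.natDegree_add_eq_left_of_natDegree_lt (by omega), hpk]

lemma R_monic_deg (P : ℕ → Polynomial ℝ)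
    (hPmonic : ∀ n, (P n).Monic) (hPdeg : ∀ n, (P n).natDegree = n)
    (A B : ℕ → ℝ) (R : ℕ → Polynomial ℝ)
    (hR1 : R 1 = P 3 + Polynomial.C (A 1) * P 1)
    (hRn : ∀ n, 2 ≤ n →
      R n = P (n+2) + Polynomial.C (A n) * P n + Polynomial.C (B n) * P (n-2)) :
    ∀ n, 1 ≤ n → (R n).Monic ∧ (R n).natDegree = n + 2 := by
  intro n hn
  match n, hn with
  | 1, _ =>
      rw [hR1]
      apply monic_add_aux _ _ 3 (hPmonic 3) (hPdeg 3)
      have := Polynomial.natDegree_C_mul_le (A 1) (P 1)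
      rw [hPdeg 1] at this
      omega
  | (m+2), _ =>
      rw [hRn (m+2) (by omega)]
      have h1 : (P (m+4) + Polynomial.C (A (m+2)) * P (m+2)).Monic ∧
          (P (m+4) + Polynomial.C (A (m+2)) * P (m+2)).natDegree = m + 4 := by
        apply monic_add_aux _ _ (m+4) (hPmonic (m+4)) (hPdeg (m+4))
        have := Polynomial.natDegree_C_mul_le (A (m+2)) (P (m+2))
        rw [hPdeg (m+2)] at this
        omega
      have e4 : m + 2 + 2 = m + 4 := by omega
      have e2 : m + 2 - 2 = m := by omega
      rw [e4, e2]
      have := monic_add_aux _ (Polynomial.C (B (m+2)) * P m) (m+4) h1.1 h1.2 (by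
        have := Polynomial.natDegree_C_mul_le (B (m+2)) (P m)
        rw [hPdeg m] at this
        omega)
      exact ⟨this.1, by omega⟩

lemma R_parity (P : ℕ → Polynomial ℝ)
    (hPparity : ∀ n x, (P n).eval (-x) = (-1 : ℝ)^n * (P n).eval x)
    (A B : ℕ → ℝ) (R : ℕ → Polynomial ℝ)
    (hR0 : R 0 = 1)
    (hR1 : R 1 = P 3 + Polynomial.C (A 1) * P 1)
    (hRn : ∀ n, 2 ≤ n →
      R n = P (n+2) + Polynomial.C (A n) * P n + Polynomial.C (B n) * P (n-2)) :
    ∀ n x, (R n).eval (-x) = (-1 : ℝ)^n * (R n).eval x := by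
  intro n x
  match n with
  | 0 => simp [hR0]
  | 1 =>
      rw [hR1]
      simp only [Polynomial.eval_add, Polynomial.eval_mul, Polynomial.eval_C, hPparity]
      norm_num
      ring
  | (m+2) =>
      rw [hRn (m+2) (by omega)]
      have e2 : m + 2 - 2 = m := by omega
      rw [e2]
      simp only [Polynomial.eval_add, Polynomial.eval_mul, Polynomial.eval_C, hPparity]
      rw [show m+2+2 = m+4 by omega]
      rw [show ((-1:ℝ))^(m+4) = (-1)^m * ((-1)^2)^2 by rw [← pow_mul, ← pow_add],
        show ((-1:ℝ))^(m+2) = (-1)^m * (-1)^2 by rw [← pow_add]]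
      ring


lemma P1_eq (P : ℕ → Polynomial ℝ)
    (hPmonic : ∀ n, (P n).Monic) (hPdeg : ∀ n, (P n).natDegree = n)
    (hPparity : ∀ n x, (P n).eval (-x) = (-1 : ℝ)^n * (P n).eval x) :
    P 1 = Polynomial.X := by
  have h0 : (P 1).coeff 0 = 0 := by
    have h := hPparity 1 0
    rw [neg_zero] at h
    rw [Polynomial.coeff_zero_eq_eval_zero]
    nlinarith [h]
  have h1 : (P 1).coeff 1 = 1 := by
    have := (hPmonic 1).coeff_natDegree
    rwa [hPdeg 1] at this
  have := Polynomial.eq_X_add_C_of_natDegree_le_one (le_of_eq (hPdeg 1))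
  rw [this, h0, h1]
  simp

lemma P3_eq (P : ℕ → Polynomial ℝ)
    (hPmonic : ∀ n, (P n).Monic) (hPdeg : ∀ n, (P n).natDegree = n)
    (hPparity : ∀ n x, (P n).eval (-x) = (-1 : ℝ)^n * (P n).eval x) :
    P 3 = Polynomial.X^3 + Polynomial.C ((P 3).coeff 1) * Polynomial.X := by
  have hcomp := comp_neg_of_eval (P 3) ((-1:ℝ)^3) (fun x => hPparity 3 x)
  have hco : ∀ j, ((-1:ℝ))^j * (P 3).coeff j = (-1:ℝ)^3 * (P 3).coeff j := by
    intro j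
    rw [← coeff_comp_neg_X, hcomp, Polynomial.coeff_C_mul]
  have h0 : (P 3).coeff 0 = 0 := by have := hco 0; norm_num at this; linarith
  have h2 : (P 3).coeff 2 = 0 := by have := hco 2; norm_num at this; linarith
  have h3 : (P 3).coeff 3 = 1 := by
    have := (hPmonic 3).coeff_natDegree
    rwa [hPdeg 3] at this
  ext j
  rw [Polynomial.coeff_add, Polynomial.coeff_C_mul, Polynomial.coeff_X_pow, Polynomial.coeff_X]
  match j with
  | 0 => simp [h0]
  | 1 => norm_num
  | 2 => simp [h2]
  | 3 => simp [h3]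
  | (j+4) =>
      rw [if_neg (by omega : ¬ (j+4 = 3)), if_neg (by omega : ¬ (1 = j+4))]
      simp [Polynomial.coeff_eq_zero_of_natDegree_lt (by rw [hPdeg 3]; omega : (P 3).natDegree < j+4)]

lemma R1_explicit (P : ℕ → Polynomial ℝ)
    (hPmonic : ∀ n, (P n).Monic) (hPdeg : ∀ n, (P n).natDegree = n)
    (hPparity : ∀ n x, (P n).eval (-x) = (-1 : ℝ)^n * (P n).eval x)
    (A : ℕ → ℝ) (R : ℕ → Polynomial ℝ)
    (hR1 : R 1 = P 3 + Polynomial.C (A 1) * P 1)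
    (hRi1 : devC (R 1) Complex.I = 0) :
    R 1 = Polynomial.X^3 + Polynomial.C 3 * Polynomial.X := by
  obtain ⟨d, hd⟩ : ∃ d, P 3 = Polynomial.X^3 + Polynomial.C d * Polynomial.X :=
    ⟨_, P3_eq P hPmonic hPdeg hPparity⟩
  have hform : R 1 = Polynomial.X^3 + Polynomial.C (d + A 1) * Polynomial.X := by
    rw [hR1, hd, P1_eq P hPmonic hPdeg hPparity, Polynomial.C_add]
    ring
  set e := d + A 1 with he
  rw [hform] at hRi1
  have hcomp : devC (Polynomial.X^3 + Polynomial.C e * Polynomial.X) Complex.I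
      = 3 * Complex.I^2 + (e:ℂ) := by
    rw [devC]
    simp only [Polynomial.map_add, Polynomial.map_pow, Polynomial.map_X, Polynomial.map_mul,
      Polynomial.map_C, Polynomial.derivative_add, Polynomial.derivative_X_pow,
      Polynomial.derivative_C_mul, Polynomial.derivative_X, Polynomial.eval_add,
      Polynomial.eval_mul, Polynomial.eval_C, Polynomial.eval_pow, Polynomial.eval_X,
      Polynomial.eval_one]
    rw [show ((algebraMap ℝ ℂ) e) = (e:ℂ) from rfl]
    push_cast
    ring
  rw [hcomp, Complex.I_sq] at hRi1
  have he3 : e = 3 := by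
    have : (e:ℂ) = 3 := by linear_combination hRi1
    exact_mod_cast this
  rw [hform, he3]

end S5
section S6
open MeasureTheory Polynomial

lemma integral_add3 (μ : Measure ℝ) (f g h : ℝ → ℝ) (hf : Integrable f μ)
    (hg : Integrable g μ) (hh : Integrable h μ) :
    ∫ x, f x + g x + h x ∂μ = (∫ x, f x ∂μ) + (∫ x, g x ∂μ) + (∫ x, h x ∂μ) := by
  have hfg : Integrable (fun x => f x + g x) μ := hf.add hg
  rw [MeasureTheory.integral_add hfg hh, MeasureTheory.integral_add hf hg]

lemma P_orth_lowdeg (μ : Measure ℝ)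
    (hint : ∀ p : Polynomial ℝ, Integrable (fun x => p.eval x) μ)
    (P : ℕ → Polynomial ℝ)
    (hPmonic : ∀ n, (P n).Monic) (hPdeg : ∀ n, (P n).natDegree = n)
    (hPorth : ∀ m n, m ≠ n → ∫ x, (P m).eval x * (P n).eval x ∂μ = 0) :
    ∀ j (q : Polynomial ℝ), q.natDegree < j → ∫ x, (P j).eval x * q.eval x ∂μ = 0 := by
  intro j q hq
  exact orth_span μ hint P hPmonic hPdeg (P j) (j-1)
    (fun k hk => hPorth j k (by omega)) q (by omega)

lemma ROrth (μ : Measure ℝ)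
    (hint : ∀ p : Polynomial ℝ, Integrable (fun x => p.eval x) μ)
    (P : ℕ → Polynomial ℝ)
    (hPmonic : ∀ n, (P n).Monic) (hPdeg : ∀ n, (P n).natDegree = n)
    (hPorth : ∀ m n, m ≠ n → ∫ x, (P m).eval x * (P n).eval x ∂μ = 0)
    (hPparity : ∀ n x, (P n).eval (-x) = (-1 : ℝ)^n * (P n).eval x)
    (A B : ℕ → ℝ) (R : ℕ → Polynomial ℝ)
    (hR1 : R 1 = P 3 + Polynomial.C (A 1) * P 1)
    (hRn : ∀ n, 2 ≤ n →
      R n = P (n+2) + Polynomial.C (A n) * P n + Polynomial.C (B n) * P (n-2))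
    (hRi : ∀ n, 1 ≤ n → devC (R n) Complex.I = 0)
    (hRii : ∀ n, 1 ≤ n → ∫ x, (R n).eval x / (1+x^2)^2 ∂μ = 0)
    (hRiii : ∀ n, 2 ≤ n → ∫ x, (R 1).eval x * (R n).eval x / (1+x^2)^2 ∂μ = 0) :
    ∀ m k, 1 ≤ k → k < m → ∫ x, (R m).eval x * (R k).eval x / (1+x^2)^2 ∂μ = 0 := by
  have hR1X := R1_explicit P hPmonic hPdeg hPparity A R hR1 (hRi 1 le_rfl)
  intro m k hk1 hkm
  have hm2 : 2 ≤ m := by omega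
  rcases eq_or_lt_of_le hk1 with hk | hk2
  · -- k = 1
    have h := hRiii m hm2
    rw [← hk] at *
    rw [show (fun x => (R m).eval x * (R 1).eval x / (1+x^2)^2)
        = fun x => (R 1).eval x * (R m).eval x / (1+x^2)^2 by funext x; ring]
    exact h
  · -- k ≥ 2
    obtain ⟨q, a, b, hdecomp, hqdeg⟩ := decomp (R k) (hRi k (by omega))
    have hRkdeg : (R k).natDegree = k + 2 :=
      (R_monic_deg P hPmonic hPdeg A B R hR1 hRn k (by omega)).2
    rw [hRkdeg] at hqdeg
    have i2 : Integrable (fun x => (R 1).eval x * (R m).eval x / (1+x^2)^2) μ := by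
      have := integrable_div μ hint (R 1 * R m)
      simpa [Polynomial.eval_mul] using this
    have i3 := integrable_div μ hint (R m)
    have key : (fun x => (R m).eval x * (R k).eval x / (1+x^2)^2)
        = fun x => ((R m) * q).eval x + a * ((R 1).eval x * (R m).eval x / (1+x^2)^2)
            + b * ((R m).eval x / (1+x^2)^2) := by
      funext x
      have hx : ((1:ℝ)+x^2)^2 ≠ 0 := by positivity
      have hev : (R k).eval x = (1+x^2)^2 * q.eval x + a * (x^3 + 3*x) + b := by
        rw [hdecomp]
        simp [Polynomial.eval_add, Polynomial.eval_mul, Polynomial.eval_pow]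
      have hR1ev : (R 1).eval x = x^3 + 3*x := by
        rw [hR1X]; simp
      rw [Polynomial.eval_mul, hev, hR1ev]
      field_simp
    rw [key, integral_add3 μ _ _ _ (hint _) (i2.const_mul a) (i3.const_mul b),
      MeasureTheory.integral_const_mul, MeasureTheory.integral_const_mul,
      hRiii m hm2, hRii m (by omega)]
    have hzero : ∫ x, ((R m) * q).eval x ∂μ = 0 := by
      rw [hRn m hm2]
      have keyq : (fun x => ((P (m+2) + Polynomial.C (A m) * P m + Polynomial.C (B m) * P (m-2)) * q).eval x)
          = fun x => ((P (m+2)) * q).eval x + A m * ((P m * q).eval x)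
              + B m * ((P (m-2) * q).eval x) := by
        funext x
        simp only [Polynomial.eval_add, Polynomial.eval_mul, Polynomial.eval_C]
        ring
      rw [keyq, integral_add3 μ _ _ _ (hint _) ((hint (P m * q)).const_mul _)
          ((hint (P (m-2) * q)).const_mul _),
        MeasureTheory.integral_const_mul, MeasureTheory.integral_const_mul]
      have e1 : ∫ x, ((P (m+2)) * q).eval x ∂μ = 0 := by
        simp only [Polynomial.eval_mul]
        exact P_orth_lowdeg μ hint P hPmonic hPdeg hPorth (m+2) q (by omega)
      have e2 : ∫ x, ((P m) * q).eval x ∂μ = 0 := by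
        simp only [Polynomial.eval_mul]
        exact P_orth_lowdeg μ hint P hPmonic hPdeg hPorth m q (by omega)
      have e3 : ∫ x, ((P (m-2)) * q).eval x ∂μ = 0 := by
        simp only [Polynomial.eval_mul]
        exact P_orth_lowdeg μ hint P hPmonic hPdeg hPorth (m-2) q (by omega)
      rw [e1, e2, e3]
      ring
    rw [hzero]
    ring

end S6
section S7
open MeasureTheory Polynomial

lemma Sint1 (μ : Measure ℝ)
    (hint : ∀ p : Polynomial ℝ, Integrable (fun x => p.eval x) μ)
    (R S : ℕ → Polynomial ℝ)
    (hSrec : ∀ n, ∃ g : ℝ, (1 + Polynomial.X^2)^2 * S n = Polynomial.C g * R n + R (n+2))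
    (hRii : ∀ n, 1 ≤ n → ∫ x, (R n).eval x / (1+x^2)^2 ∂μ = 0) :
    ∀ n, 1 ≤ n → ∫ x, (S n).eval x ∂μ = 0 := by
  intro n hn
  obtain ⟨g, hg⟩ := hSrec n
  have key : (fun x => (S n).eval x)
      = fun x => g * ((R n).eval x / (1+x^2)^2) + ((R (n+2)).eval x / (1+x^2)^2) := by
    funext x
    have hx : ((1:ℝ)+x^2)^2 ≠ 0 := by positivity
    have he := congrArg (Polynomial.eval x) hg
    simp only [Polynomial.eval_mul, Polynomial.eval_add, Polynomial.eval_pow,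
      Polynomial.eval_one, Polynomial.eval_X, Polynomial.eval_C] at he
    field_simp
    linarith [he]
  rw [key, integral_add ((integrable_div μ hint (R n)).const_mul g)
      (integrable_div μ hint (R (n+2))), MeasureTheory.integral_const_mul,
    hRii n hn, hRii (n+2) (by omega)]
  ring

lemma SintR (μ : Measure ℝ)
    (hint : ∀ p : Polynomial ℝ, Integrable (fun x => p.eval x) μ)
    (R S : ℕ → Polynomial ℝ)
    (hSrec : ∀ n, ∃ g : ℝ, (1 + Polynomial.X^2)^2 * S n = Polynomial.C g * R n + R (n+2))
    (hROrth : ∀ m k, 1 ≤ k → k < m → ∫ x, (R m).eval x * (R k).eval x / (1+x^2)^2 ∂μ = 0) :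
    ∀ n k, 1 ≤ k → k < n → ∫ x, (S n).eval x * (R k).eval x ∂μ = 0 := by
  intro n k hk1 hkn
  obtain ⟨g, hg⟩ := hSrec n
  have key : (fun x => (S n).eval x * (R k).eval x)
      = fun x => g * ((R n).eval x * (R k).eval x / (1+x^2)^2)
          + ((R (n+2)).eval x * (R k).eval x / (1+x^2)^2) := by
    funext x
    have hx : ((1:ℝ)+x^2)^2 ≠ 0 := by positivity
    have he := congrArg (Polynomial.eval x) hg
    simp only [Polynomial.eval_mul, Polynomial.eval_add, Polynomial.eval_pow,
      Polynomial.eval_one, Polynomial.eval_X, Polynomial.eval_C] at he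
    field_simp
    linear_combination (Polynomial.eval x (R k)) * he
  have i1 : Integrable (fun x => (R n).eval x * (R k).eval x / (1+x^2)^2) μ := by
    have := integrable_div μ hint (R n * R k)
    simpa [Polynomial.eval_mul] using this
  have i2 : Integrable (fun x => (R (n+2)).eval x * (R k).eval x / (1+x^2)^2) μ := by
    have := integrable_div μ hint (R (n+2) * R k)
    simpa [Polynomial.eval_mul] using this
  rw [key, integral_add (i1.const_mul g) i2, MeasureTheory.integral_const_mul,
    hROrth n k hk1 hkn, hROrth (n+2) k hk1 (by omega)]
  ring

lemma S_parity (R S : ℕ → Polynomial ℝ)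
    (hSrec : ∀ n, ∃ g : ℝ, (1 + Polynomial.X^2)^2 * S n = Polynomial.C g * R n + R (n+2))
    (hRpar : ∀ n x, (R n).eval (-x) = (-1 : ℝ)^n * (R n).eval x) :
    ∀ n x, (S n).eval (-x) = (-1 : ℝ)^n * (S n).eval x := by
  intro n x
  obtain ⟨g, hg⟩ := hSrec n
  have hx : ((1:ℝ)+x^2)^2 ≠ 0 := by positivity
  have he1 := congrArg (Polynomial.eval (-x)) hg
  have he2 := congrArg (Polynomial.eval x) hg
  simp only [Polynomial.eval_mul, Polynomial.eval_add, Polynomial.eval_pow,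
    Polynomial.eval_one, Polynomial.eval_X, Polynomial.eval_C, neg_sq] at he1 he2
  rw [hRpar n x, hRpar (n+2) x] at he1
  have hpow : ((-1:ℝ))^(n+2) = (-1)^n := by
    rw [pow_add]; norm_num
  rw [hpow] at he1
  apply mul_left_cancel₀ hx
  rw [he1]
  linear_combination (-((-1:ℝ))^n) * he2

lemma S_deg (R S : ℕ → Polynomial ℝ)
    (hSrec : ∀ n, ∃ g : ℝ, (1 + Polynomial.X^2)^2 * S n = Polynomial.C g * R n + R (n+2))
    (hRdeg : ∀ n, 1 ≤ n → (R n).Monic ∧ (R n).natDegree = n + 2) :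
    ∀ n, 1 ≤ n → S n ≠ 0 ∧ (S n).natDegree = n := by
  intro n hn
  obtain ⟨g, hg⟩ := hSrec n
  have hrhs : (Polynomial.C g * R n + R (n+2)).natDegree = n + 4 := by
    rw [Polynomial.natDegree_add_eq_right_of_natDegree_lt, (hRdeg (n+2) (by omega)).2]
    have h1 := Polynomial.natDegree_C_mul_le g (R n)
    rw [(hRdeg (n+2) (by omega)).2]
    have h2 := (hRdeg n hn).2
    omega
  have hSne : S n ≠ 0 := by
    intro h0
    rw [h0, mul_zero] at hg
    rw [← hg] at hrhs
    simp at hrhs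
  refine ⟨hSne, ?_⟩
  have := Polynomial.natDegree_mul (monic_og.ne_zero) hSne
  rw [hg, hrhs, natDegree_og] at this
  omega

end S7
section S8
open MeasureTheory Polynomial

lemma self_orth_contra (μ : Measure ℝ)
    (hsupp : (measSupport μ).Infinite)
    (hint : ∀ p : Polynomial ℝ, Integrable (fun x => p.eval x) μ)
    (R S : ℕ → Polynomial ℝ)
    (hRdeg : ∀ n, 1 ≤ n → (R n).Monic ∧ (R n).natDegree = n + 2)
    (m : ℕ) (hm : 1 ≤ m)
    (hSm_ne : S m ≠ 0) (hSm_deg : (S m).natDegree = m)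
    (h0 : ∫ x, (S m).eval x ∂μ = 0)
    (h1 : ∫ x, x * (S m).eval x ∂μ = 0)
    (h2 : ∫ x, x^2 * (S m).eval x ∂μ = 0)
    (hR : ∀ k, 1 ≤ k → k < m → ∫ x, (S m).eval x * (R k).eval x ∂μ = 0) :
    False := by
  set E : ℕ → Polynomial ℝ := fun k =>
    if k = 0 then 1 else if k = 1 then Polynomial.X
    else if k = 2 then Polynomial.X^2 else R (k-2) with hE
  have hEmonic : ∀ k, (E k).Monic := by
    intro k
    match k with
    | 0 => simpa [hE] using monic_one
    | 1 => simpa [hE] using monic_X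
    | 2 => simpa [hE] using monic_X_pow 2
    | (k+3) =>
        have : E (k+3) = R (k+1) := by simp [hE]
        rw [this]
        exact (hRdeg (k+1) (by omega)).1
  have hEd : ∀ k, (E k).natDegree = k := by
    intro k
    match k with
    | 0 => simp [hE]
    | 1 => simp [hE]
    | 2 => simp [hE]
    | (k+3) =>
        have : E (k+3) = R (k+1) := by simp [hE]
        rw [this, (hRdeg (k+1) (by omega)).2]
  have horth : ∀ k, k ≤ m + 1 → ∫ x, (S m).eval x * (E k).eval x ∂μ = 0 := by
    intro k hk
    match k with
    | 0 => simpa [hE] using h0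
    | 1 =>
        have : (fun x => (S m).eval x * (E 1).eval x) = fun x => x * (S m).eval x := by
          funext x; simp [hE]; ring
        rw [this]; exact h1
    | 2 =>
        have : (fun x => (S m).eval x * (E 2).eval x) = fun x => x^2 * (S m).eval x := by
          funext x; simp [hE]; ring
        rw [this]; exact h2
    | (k+3) =>
        have he : E (k+3) = R (k+1) := by simp [hE]
        rw [he]
        exact hR (k+1) (by omega) (by omega)
  have hself : ∫ x, (S m).eval x * (S m).eval x ∂μ = 0 :=
    orth_span μ hint E hEmonic hEd (S m) (m+1) horth (S m) (by omega)
  have hnonneg : 0 ≤ fun x => (S m).eval x * (S m).eval x :=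
    fun x => mul_self_nonneg _
  have hfi : Integrable (fun x => (S m).eval x * (S m).eval x) μ := by
    have := hint (S m * S m)
    simpa [Polynomial.eval_mul] using this
  have hae := (MeasureTheory.integral_eq_zero_iff_of_nonneg hnonneg hfi).mp hself
  rw [Filter.EventuallyEq, ae_iff] at hae
  simp only [Pi.zero_apply] at hae
  have hsub : measSupport μ ⊆ {x | (S m).IsRoot x} := by
    intro y hy
    by_contra hne
    have hne' : (S m).eval y ≠ 0 := hne
    set U : Set ℝ := {x | (S m).eval x ≠ 0} with hU
    have hopen : IsOpen U := by
      have : U = (fun x => (S m).eval x) ⁻¹' ({0}ᶜ) := rfl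
      rw [this]
      exact isOpen_compl_singleton.preimage (S m).continuous_aeval
    have hmem : U ∈ nhds y := hopen.mem_nhds hne'
    have hzero : μ U = 0 := by
      apply measure_mono_null _ hae
      intro x hx
      simp only [Set.mem_setOf_eq] at hx ⊢
      exact fun h => hx (mul_self_eq_zero.mp h)
    exact hy U hmem hzero
  exact (hsupp.mono hsub) (Polynomial.finite_setOf_isRoot hSm_ne)

end S8
/-- Theorem 4.5: the denominators defining ρ_n are nonzero, and the
monic polynomial 𝒫_n = S_n + ρ_n S_{n-2} is orthogonal to 1, x, x²,
R_1, …, R_{n-3} with respect to μ. -/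
theorem stmt_8
    (μ : Measure ℝ)
    (hsymm : μ.map (fun x => -x) = μ)
    (hsupp : (measSupport μ).Infinite)
    (hint : ∀ p : Polynomial ℝ, Integrable (fun x => p.eval x) μ)
    (P : ℕ → Polynomial ℝ)
    (hPmonic : ∀ n, (P n).Monic)
    (hPdeg : ∀ n, (P n).natDegree = n)
    (hPorth : ∀ m n, m ≠ n → ∫ x, (P m).eval x * (P n).eval x ∂μ = 0)
    (hPparity : ∀ n x, (P n).eval (-x) = (-1 : ℝ)^n * (P n).eval x)
    (A B : ℕ → ℝ) (R : ℕ → Polynomial ℝ)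
    (hR0 : R 0 = 1)
    (hR1 : R 1 = P 3 + Polynomial.C (A 1) * P 1)
    (hRn : ∀ n, 2 ≤ n →
      R n = P (n+2) + Polynomial.C (A n) * P n + Polynomial.C (B n) * P (n-2))
    (hRi : ∀ n, 1 ≤ n → devC (R n) Complex.I = 0)
    (hRii : ∀ n, 1 ≤ n → ∫ x, (R n).eval x / (1+x^2)^2 ∂μ = 0)
    (hRiii : ∀ n, 2 ≤ n → ∫ x, (R 1).eval x * (R n).eval x / (1+x^2)^2 ∂μ = 0)
    (S : ℕ → Polynomial ℝ)
    (hc : ∀ n, cconst R n ≠ 0)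
    (hS : ∀ n, Polynomial.C (cconst R n) * ((1 + Polynomial.X^2)^2)
            * ((S n).map (algebraMap ℝ ℂ)) = Dpoly R n)
    :
    (∀ n : ℕ, 3 ≤ n → Odd n → ∫ x, x * (S (n-2)).eval x ∂μ ≠ 0) ∧
    (∀ n : ℕ, 4 ≤ n → Even n → ∫ x, x^2 * (S (n-2)).eval x ∂μ ≠ 0) ∧
    (∀ n : ℕ, 1 ≤ n →
      (∫ x, (S n + Polynomial.C (rho μ S n) * S (n-2)).eval x ∂μ = 0) ∧
      (2 ≤ n → ∫ x, x * (S n + Polynomial.C (rho μ S n) * S (n-2)).eval x ∂μ = 0) ∧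
      (3 ≤ n → ∫ x, x^2 * (S n + Polynomial.C (rho μ S n) * S (n-2)).eval x ∂μ = 0) ∧
      (∀ k : ℕ, 1 ≤ k → k ≤ n - 3 →
        ∫ x, (S n + Polynomial.C (rho μ S n) * S (n-2)).eval x * (R k).eval x ∂μ = 0)) := by
  have hRpar := R_parity P hPparity A B R hR0 hR1 hRn
  have hRcomp : ∀ n, (R n).comp (-Polynomial.X) = Polynomial.C ((-1:ℝ)^n) * R n :=
    fun n => comp_neg_of_eval _ _ (hRpar n)
  have hSrec : ∀ n, ∃ g : ℝ, (1 + Polynomial.X^2)^2 * S n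
      = Polynomial.C g * R n + R (n+2) := Srec R S hc hS hRcomp
  have hRdeg := R_monic_deg P hPmonic hPdeg A B R hR1 hRn
  have hROrth := ROrth μ hint P hPmonic hPdeg hPorth hPparity A B R hR1 hRn hRi hRii hRiii
  have hSint1 := Sint1 μ hint R S hSrec hRii
  have hSintR := SintR μ hint R S hSrec hROrth
  have hSpar := S_parity R S hSrec hRpar
  have hSdeg := S_deg R S hSrec hRdeg
  -- parity vanishing
  have hxS_even : ∀ n, Even n → ∫ x, x * (S n).eval x ∂μ = 0 := by
    intro n hn
    apply integral_odd μ hsymm _ (continuous_id.mul (S n).continuous)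
    intro x
    have := hSpar n x
    rw [hn.neg_one_pow] at this
    show -x * (S n).eval (-x) = -(x * (S n).eval x)
    rw [this, one_mul]
    ring
  have hx2S_odd : ∀ n, Odd n → ∫ x, x^2 * (S n).eval x ∂μ = 0 := by
    intro n hn
    apply integral_odd μ hsymm _ ((continuous_pow 2).mul (S n).continuous)
    intro x
    have := hSpar n x
    rw [hn.neg_one_pow] at this
    show (-x)^2 * (S n).eval (-x) = -(x^2 * (S n).eval x)
    rw [this, neg_sq]
    ring
  -- the key nonvanishing statements
  have keyOdd : ∀ m, 1 ≤ m → Odd m → ∫ x, x * (S m).eval x ∂μ ≠ 0 := by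
    intro m hm hodd hcon
    exact self_orth_contra μ hsupp hint R S hRdeg m hm (hSdeg m hm).1 (hSdeg m hm).2
      (hSint1 m hm) hcon (hx2S_odd m hodd) (fun k hk1 hkm => hSintR m k hk1 hkm)
  have keyEven : ∀ m, 2 ≤ m → Even m → ∫ x, x^2 * (S m).eval x ∂μ ≠ 0 := by
    intro m hm heven hcon
    exact self_orth_contra μ hsupp hint R S hRdeg m (by omega) (hSdeg m (by omega)).1
      (hSdeg m (by omega)).2 (hSint1 m (by omega)) (hxS_even m heven) hcon
      (fun k hk1 hkm => hSintR m k hk1 hkm)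
  refine ⟨?_, ?_, ?_⟩
  · intro n hn hodd
    apply keyOdd (n-2) (by omega)
    rw [Nat.odd_iff] at hodd ⊢
    omega
  · intro n hn heven
    apply keyEven (n-2) (by omega)
    rw [Nat.even_iff] at heven ⊢
    omega
  · intro n hn
    set ρ := rho μ S n with hρdef
    have hsplit : ∀ f : ℝ → ℝ, Integrable (fun x => f x * (S n).eval x) μ →
        Integrable (fun x => f x * (S (n-2)).eval x) μ →
        ∫ x, f x * (S n + Polynomial.C ρ * S (n-2)).eval x ∂μ
          = (∫ x, f x * (S n).eval x ∂μ) + ρ * ∫ x, f x * (S (n-2)).eval x ∂μ := by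
      intro f hf1 hf2
      have key : (fun x => f x * (S n + Polynomial.C ρ * S (n-2)).eval x)
          = fun x => f x * (S n).eval x + ρ * (f x * (S (n-2)).eval x) := by
        funext x
        simp only [Polynomial.eval_add, Polynomial.eval_mul, Polynomial.eval_C]
        ring
      rw [key, integral_add hf1 (hf2.const_mul ρ), MeasureTheory.integral_const_mul]
    have int1 : ∀ j : ℕ, Integrable (fun x => (1:ℝ) * (S j).eval x) μ := by
      intro j
      simpa using hint (S j)
    have intX : ∀ j : ℕ, Integrable (fun x => x * (S j).eval x) μ := by
      intro j
      have := hint (Polynomial.X * S j)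
      simpa [Polynomial.eval_mul] using this
    have intX2 : ∀ j : ℕ, Integrable (fun x => x^2 * (S j).eval x) μ := by
      intro j
      have := hint (Polynomial.X^2 * S j)
      simpa [Polynomial.eval_mul, Polynomial.eval_pow] using this
    refine ⟨?_, ?_, ?_, ?_⟩
    · -- ∫ 𝒫 = 0
      have h := hsplit 1 (int1 n) (int1 (n-2))
      simp only [one_mul, Pi.one_apply] at h
      rw [h, hSint1 n hn]
      rcases le_or_gt n 2 with h2 | h2
      · have : ρ = 0 := by rw [hρdef, rho, if_pos h2]
        rw [this]; ring
      · rw [hSint1 (n-2) (by omega)]; ring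
    · intro hn2
      have h := hsplit (fun x => x) (intX n) (intX (n-2))
      rw [h]
      rcases Nat.even_or_odd n with he | ho
      · rw [hxS_even n he, hxS_even (n-2) (by rw [Nat.even_iff] at he ⊢; omega)]
        ring
      · have hn3 : 3 ≤ n := by rw [Nat.odd_iff] at ho; omega
        have hρ : ρ = -(∫ x, x * (S n).eval x ∂μ) / (∫ x, x * (S (n-2)).eval x ∂μ) := by
          rw [hρdef, rho, if_neg (by omega), if_pos ho]
        have hden : (∫ x, x * (S (n-2)).eval x ∂μ) ≠ 0 :=
          keyOdd (n-2) (by omega) (by rw [Nat.odd_iff] at ho ⊢; omega)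
        rw [hρ]
        field_simp
        ring
    · intro hn3
      have h := hsplit (fun x => x^2) (intX2 n) (intX2 (n-2))
      rw [h]
      rcases Nat.even_or_odd n with he | ho
      · have hn4 : 4 ≤ n := by rw [Nat.even_iff] at he; omega
        have hρ : ρ = -(∫ x, x^2 * (S n).eval x ∂μ) / (∫ x, x^2 * (S (n-2)).eval x ∂μ) := by
          rw [hρdef, rho, if_neg (by omega), if_neg (by simp [Nat.odd_iff, Nat.even_iff] at he ⊢; omega)]
        have hden : (∫ x, x^2 * (S (n-2)).eval x ∂μ) ≠ 0 :=
          keyEven (n-2) (by omega) (by rw [Nat.even_iff] at he ⊢; omega)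
        rw [hρ]
        field_simp
        ring
      · rw [hx2S_odd n ho, hx2S_odd (n-2) (by rw [Nat.odd_iff] at ho ⊢; omega)]
        ring
    · intro k hk1 hk3
      have hn4 : 4 ≤ n := by omega
      have key : (fun x => (S n + Polynomial.C ρ * S (n-2)).eval x * (R k).eval x)
          = fun x => (S n).eval x * (R k).eval x + ρ * ((S (n-2)).eval x * (R k).eval x) := by
        funext x
        simp only [Polynomial.eval_add, Polynomial.eval_mul, Polynomial.eval_C]
        ring
      have i1 : Integrable (fun x => (S n).eval x * (R k).eval x) μ := by
        have := hint (S n * R k)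
        simpa [Polynomial.eval_mul] using this
      have i2 : Integrable (fun x => (S (n-2)).eval x * (R k).eval x) μ := by
        have := hint (S (n-2) * R k)
        simpa [Polynomial.eval_mul] using this
      rw [key, integral_add i1 (i2.const_mul ρ), MeasureTheory.integral_const_mul,
        hSintR n k hk1 (by omega), hSintR (n-2) k hk1 (by omega)]
      ring
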